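/- arXiv:1306.4531 — 5 statements merged into one kernel-verified Lean document; each statement's English description precedes it below -/
import Mathlib

section
/- Let L be the generator of a trace-preserving quantum dynamical semigroup on the trace class operators of a separable complex Hilbert space H, and suppose L is in generalized standard form: there are a closed densely defined operator M on H generating a contraction semigroup and operators L_k on D(M), each relatively bounded with respect to M, with L(ρ) = Σ_k L_k ρ L_k† − Mρ − ρM† for all finite-rank ρ = Σ_n |φ_n⟩⟨ψ_n| with φ_n, ψ_n ∈ D(M), the set D_0 of such ρ a core for L, and Σ_k ‖L_k φ‖² = 2 Re⟨φ, Mφ⟩ for all φ ∈ D(M). Then the semigroup is matrix normal: there exists an orthonormal basis {e_k} of H such that D_e² (the span of the matrix units |e_k⟩⟨e_ℓ|) is a core for L. -/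
open Filter Set
open scoped InnerProductSpace ComplexConjugate ComplexOrder Topology ComplexInnerProductSpace

noncomputable section

variable {H T : Type*}

/-- An abstract model of the Banach space `𝔗(H)` of trace-class operators on the Hilbert
space `H`, equipped with the trace norm `‖·‖₁`: a Banach space `T` acting injectively as
bounded operators on `H`, containing all rank-one operators `|x⟩⟨y|` (with
`‖ |x⟩⟨y| ‖₁ = ‖x‖·‖y‖`, their span being dense), together with the trace functional. -/
structure TraceClassModel (H T : Type*) [NormedAddCommGroup H] [InnerProductSpace ℂ H]
    [NormedAddCommGroup T] [NormedSpace ℂ T] where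
  /-- a trace-class operator acts as a bounded operator on `H` -/
  toCLM : T →ₗ[ℂ] (H →L[ℂ] H)
  toCLM_injective : Function.Injective toCLM
  /-- the rank-one operator `|x⟩⟨y| : z ↦ ⟪y, z⟫ • x` as a trace-class operator -/
  rankOne : H → H → T
  toCLM_rankOne : ∀ x y z : H, toCLM (rankOne x y) z = ⟪y, z⟫_ℂ • x
  norm_rankOne : ∀ x y : H, ‖rankOne x y‖ = ‖x‖ * ‖y‖
  dense_span_rankOne :
    Dense ((Submodule.span ℂ (Set.range fun p : H × H => rankOne p.1 p.2) : Submodule ℂ T) : Set T)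
  /-- the trace, a continuous linear functional for the trace norm -/
  trace : T →L[ℂ] ℂ
  trace_rankOne : ∀ x y : H, trace (rankOne x y) = ⟪y, x⟫_ℂ

variable [NormedAddCommGroup H] [InnerProductSpace ℂ H] [CompleteSpace H]
  [NormedAddCommGroup T] [NormedSpace ℂ T] [CompleteSpace T]

/-- The standard criterion for complete positivity of a map on trace-class operators:
`∑_{k,ℓ} ⟪ψ_k, P(|φ_k⟩⟨φ_ℓ|) ψ_ℓ⟫ ≥ 0` for all finite families of vectors. -/
def TraceClassModel.IsCPMap (Mod : TraceClassModel H T) (P : T → T) : Prop :=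
  ∀ (N : ℕ) (φ ψ : Fin N → H),
    0 ≤ ∑ k, ∑ l, ⟪ψ k, Mod.toCLM (P (Mod.rankOne (φ k) (φ l))) (ψ l)⟫_ℂ

/-- A quantum dynamical semigroup: a strongly continuous semigroup of trace-preserving
completely positive linear maps on the trace class. -/
structure QDS {H T : Type*} [NormedAddCommGroup H] [InnerProductSpace ℂ H]
    [NormedAddCommGroup T] [NormedSpace ℂ T] (Mod : TraceClassModel H T) where
  map : ℝ → T →L[ℂ] T
  map_zero : map 0 = ContinuousLinearMap.id ℂ T
  map_add : ∀ s t : ℝ, 0 ≤ s → 0 ≤ t → map (s + t) = (map s).comp (map t)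
  strong_continuity : ∀ ρ : T, ContinuousOn (fun t : ℝ => map t ρ) (Ici 0)
  trace_preserving : ∀ t : ℝ, 0 ≤ t → ∀ ρ : T, Mod.trace (map t ρ) = Mod.trace ρ
  completely_positive : ∀ t : ℝ, 0 ≤ t → Mod.IsCPMap (map t)

variable {Mod : TraceClassModel H T}

/-- `σ = lim_{t→0+} (T^t ρ - ρ)/t` in trace norm. -/
def QDS.HasGenDerivAt (S : QDS Mod) (ρ σ : T) : Prop :=
  Tendsto (fun t : ℝ => (t : ℂ)⁻¹ • (S.map t ρ - ρ)) (𝓝[>] 0) (𝓝 σ)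

/-- The generator of a QDS: the function `L` defined on its maximal domain `Dom`,
consisting of all `ρ` for which `(T^t ρ - ρ)/t` converges in trace norm as `t → 0+`. -/
structure QDS.Generator {H T : Type*} [NormedAddCommGroup H] [InnerProductSpace ℂ H]
    [NormedAddCommGroup T] [NormedSpace ℂ T] {Mod : TraceClassModel H T} (S : QDS Mod) where
  Dom : Set T
  L : T → T
  mem_dom_iff : ∀ ρ : T, ρ ∈ Dom ↔ ∃ σ, S.HasGenDerivAt ρ σ
  hasGenDerivAt : ∀ ρ ∈ Dom, S.HasGenDerivAt ρ (L ρ)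

/-- `D` is a core for the operator `L` with domain `Dom`: `D ⊆ Dom` and `D` is dense in
`Dom` with respect to the graph norm `‖ρ‖ + ‖L ρ‖`. -/
def IsCoreFor {E : Type*} [NormedAddCommGroup E] (L : E → E) (Dom D : Set E) : Prop :=
  D ⊆ Dom ∧ ∀ ρ ∈ Dom, ∀ ε : ℝ, 0 < ε → ∃ σ ∈ D, ‖ρ - σ‖ + ‖L ρ - L σ‖ < ε

/-- `e` is an orthonormal basis of `H`. -/
def IsONBasis {ι : Type*} (e : ι → H) : Prop :=
  Orthonormal ℂ e ∧ Dense ((Submodule.span ℂ (Set.range e) : Submodule ℂ H) : Set H)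

/-- `D_e²`: the linear span of the matrix units `|e_k⟩⟨e_ℓ|` of the basis `e`. -/
def TraceClassModel.De2 (Mod : TraceClassModel H T) {ι : Type*} (e : ι → H) : Set T :=
  (Submodule.span ℂ (Set.range fun p : ι × ι => Mod.rankOne (e p.1) (e p.2)) : Submodule ℂ T)

/-- The QDS is matrix normal with respect to the orthonormal basis `e`:
`D_e²` is a core for the generator. -/
def QDS.Generator.MatrixNormal {S : QDS Mod} (G : S.Generator) {ι : Type*} (e : ι → H) : Prop :=
  IsONBasis e ∧ IsCoreFor G.L G.Dom (Mod.De2 e)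

/-- `M` (a densely defined unbounded operator on `H`) generates a strongly continuous
contraction semigroup `C t = e^{-tM}` on `H`, whose generator `-M` has domain exactly
`M.domain`. -/
def GeneratesContractionSemigroupPMap (M : H →ₗ.[ℂ] H) : Prop :=
  ∃ C : ℝ → H →L[ℂ] H,
    C 0 = ContinuousLinearMap.id ℂ H ∧
    (∀ s t : ℝ, 0 ≤ s → 0 ≤ t → C (s + t) = (C s).comp (C t)) ∧
    (∀ t : ℝ, 0 ≤ t → ‖C t‖ ≤ 1) ∧
    (∀ ψ : H, ContinuousOn (fun t : ℝ => C t ψ) (Ici 0)) ∧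
    (∀ ψ : H, ψ ∈ M.domain ↔
      ∃ η, Tendsto (fun t : ℝ => (t : ℂ)⁻¹ • (C t ψ - ψ)) (𝓝[>] 0) (𝓝 η)) ∧
    (∀ φ : M.domain,
      Tendsto (fun t : ℝ => (t : ℂ)⁻¹ • (C t (φ : H) - (φ : H))) (𝓝[>] 0) (𝓝 (-(M φ))))

/-- `Mf : H → H`, restricted to `D`, generates a strongly continuous contraction semigroup
`C t = e^{-tMf}` on `H`, whose generator `-Mf` has domain exactly `D`. -/
def GeneratesContractionSemigroupOn (Mf : H → H) (D : Set H) : Prop :=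
  ∃ C : ℝ → H →L[ℂ] H,
    C 0 = ContinuousLinearMap.id ℂ H ∧
    (∀ s t : ℝ, 0 ≤ s → 0 ≤ t → C (s + t) = (C s).comp (C t)) ∧
    (∀ t : ℝ, 0 ≤ t → ‖C t‖ ≤ 1) ∧
    (∀ ψ : H, ContinuousOn (fun t : ℝ => C t ψ) (Ici 0)) ∧
    (∀ ψ : H, ψ ∈ D ↔
      ∃ η, Tendsto (fun t : ℝ => (t : ℂ)⁻¹ • (C t ψ - ψ)) (𝓝[>] 0) (𝓝 η)) ∧
    (∀ ψ ∈ D, Tendsto (fun t : ℝ => (t : ℂ)⁻¹ • (C t ψ - ψ)) (𝓝[>] 0) (𝓝 (-Mf ψ)))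



section Aux

variable {H T : Type*} [NormedAddCommGroup H] [InnerProductSpace ℂ H]
  [NormedAddCommGroup T] [NormedSpace ℂ T]

lemma rankOne_add_left' (Mo : TraceClassModel H T) (x x' y : H) :
    Mo.rankOne (x + x') y = Mo.rankOne x y + Mo.rankOne x' y := by
  apply Mo.toCLM_injective
  rw [map_add]
  ext z
  simp [Mo.toCLM_rankOne, smul_add]

lemma rankOne_smul_left' (Mo : TraceClassModel H T) (c : ℂ) (x y : H) :
    Mo.rankOne (c • x) y = c • Mo.rankOne x y := by
  apply Mo.toCLM_injective
  rw [map_smul]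
  ext z
  simp only [Mo.toCLM_rankOne, ContinuousLinearMap.coe_smul', Pi.smul_apply]
  rw [smul_comm]

lemma rankOne_add_right' (Mo : TraceClassModel H T) (x y y' : H) :
    Mo.rankOne x (y + y') = Mo.rankOne x y + Mo.rankOne x y' := by
  apply Mo.toCLM_injective
  rw [map_add]
  ext z
  simp [Mo.toCLM_rankOne, inner_add_left, add_smul]

lemma rankOne_smul_right' (Mo : TraceClassModel H T) (c : ℂ) (x y : H) :
    Mo.rankOne x (c • y) = (starRingEnd ℂ) c • Mo.rankOne x y := by
  apply Mo.toCLM_injective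
  rw [map_smul]
  ext z
  simp [Mo.toCLM_rankOne, inner_smul_left, mul_smul]
  exact smul_comm _ _ _

lemma rankOne_sub_left' (Mo : TraceClassModel H T) (x x' y : H) :
    Mo.rankOne (x - x') y = Mo.rankOne x y - Mo.rankOne x' y := by
  have h := rankOne_add_left' Mo (x - x') x' y
  rw [sub_add_cancel] at h
  rw [h]; abel

lemma rankOne_sub_right' (Mo : TraceClassModel H T) (x y y' : H) :
    Mo.rankOne x (y - y') = Mo.rankOne x y - Mo.rankOne x y' := by
  have h := rankOne_add_right' Mo x (y - y') y'
  rw [sub_add_cancel] at h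
  rw [h]; abel

lemma rankOne_zero_left' (Mo : TraceClassModel H T) (y : H) :
    Mo.rankOne 0 y = 0 := by
  have h := rankOne_sub_left' Mo y y y
  simpa using h

lemma rankOne_zero_right' (Mo : TraceClassModel H T) (x : H) :
    Mo.rankOne x 0 = 0 := by
  have h := rankOne_sub_right' Mo x x x
  simpa using h

/-- norm bound for a difference of rank-one operators -/
lemma norm_rankOne_sub_le (Mo : TraceClassModel H T) (x y x' y' : H) :
    ‖Mo.rankOne x y - Mo.rankOne x' y'‖ ≤ ‖x - x'‖ * ‖y‖ + ‖x'‖ * ‖y - y'‖ := by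
  have key : Mo.rankOne x y - Mo.rankOne x' y'
      = Mo.rankOne (x - x') y + Mo.rankOne x' (y - y') := by
    rw [rankOne_sub_left' Mo, rankOne_sub_right' Mo]; abel
  rw [key]
  calc ‖Mo.rankOne (x - x') y + Mo.rankOne x' (y - y')‖
      ≤ ‖Mo.rankOne (x - x') y‖ + ‖Mo.rankOne x' (y - y')‖ := norm_add_le _ _
    _ = ‖x - x'‖ * ‖y‖ + ‖x'‖ * ‖y - y'‖ := by rw [Mo.norm_rankOne, Mo.norm_rankOne]

/-- rank-one of two vectors in the span of a family lies in the span of its matrix units -/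
lemma rankOne_mem_span_matrixUnits (Mo : TraceClassModel H T) {ι : Type*} (e : ι → H) {x y : H}
    (hx : x ∈ Submodule.span ℂ (Set.range e)) (hy : y ∈ Submodule.span ℂ (Set.range e)) :
    Mo.rankOne x y ∈
      Submodule.span ℂ (Set.range fun p : ι × ι => Mo.rankOne (e p.1) (e p.2)) := by
  induction hx using Submodule.span_induction with
  | mem x hx =>
    obtain ⟨i, rfl⟩ := hx
    induction hy using Submodule.span_induction with
    | mem y hy =>
      obtain ⟨j, rfl⟩ := hy
      exact Submodule.subset_span ⟨(i, j), rfl⟩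
    | zero => rw [rankOne_zero_right']; exact Submodule.zero_mem _
    | add y y' _ _ hy hy' => rw [rankOne_add_right']; exact Submodule.add_mem _ hy hy'
    | smul c y _ hy => rw [rankOne_smul_right']; exact Submodule.smul_mem _ _ hy
  | zero => rw [rankOne_zero_left']; exact Submodule.zero_mem _
  | add x x' _ _ hx hx' => rw [rankOne_add_left']; exact Submodule.add_mem _ hx hx'
  | smul c x _ hx => rw [rankOne_smul_left']; exact Submodule.smul_mem _ _ hx

/-- elements of the span of matrix units with vectors in `M.domain` are finite-rank
operators built from `M.domain` -/
lemma span_matrixUnits_subset_D0 (Mo : TraceClassModel H T) (M : H →ₗ.[ℂ] H)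
    {ι : Type*} (e : ι → H) (he : ∀ i, e i ∈ M.domain) {ρ : T}
    (hρ : ρ ∈ Submodule.span ℂ (Set.range fun p : ι × ι => Mo.rankOne (e p.1) (e p.2))) :
    ∃ (N : ℕ) (φ ψ : Fin N → M.domain), ρ = ∑ n, Mo.rankOne (φ n) (ψ n) := by
  obtain ⟨n, f, g, hg⟩ := Submodule.mem_span_set'.1 hρ
  have hchoice : ∀ i : Fin n, ∃ p : ι × ι, Mo.rankOne (e p.1) (e p.2) = (g i : T) :=
    fun i => (g i).2
  choose p hp using hchoice
  refine ⟨n, fun i => ⟨f i • e (p i).1, M.domain.smul_mem _ (he _)⟩,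
    fun i => ⟨e (p i).2, he _⟩, ?_⟩
  rw [← hg]
  refine Finset.sum_congr rfl fun i _ => ?_
  rw [← hp i]
  exact (rankOne_smul_left' Mo (f i) _ _).symm

/-- elementary weighted Cauchy-Schwarz style bound for series -/
lemma tsum_mul_le_of_sq {a b : ℕ → ℝ} (ha : ∀ k, 0 ≤ a k) (hb : ∀ k, 0 ≤ b k)
    (hsa : Summable fun k => a k ^ 2) (hsb : Summable fun k => b k ^ 2)
    {s : ℝ} (hs : 0 < s) :
    Summable (fun k => a k * b k) ∧
    ∑' k, a k * b k ≤ ((∑' k, a k ^ 2) / s + s * ∑' k, b k ^ 2) / 2 := by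
  have hpt : ∀ k, a k * b k ≤ (a k ^ 2 / s + s * b k ^ 2) / 2 := by
    intro k
    have key : 2 * s * (a k * b k) ≤ a k ^ 2 + s ^ 2 * b k ^ 2 := by
      nlinarith [sq_nonneg (a k - s * b k)]
    calc a k * b k ≤ (a k ^ 2 + s ^ 2 * b k ^ 2) / (2 * s) := by
          rw [le_div_iff₀ (by positivity)]; linarith
      _ = (a k ^ 2 / s + s * b k ^ 2) / 2 := by field_simp
  have hsum : Summable fun k => (a k ^ 2 / s + s * b k ^ 2) / 2 :=
    ((hsa.div_const s).add (hsb.mul_left s)).div_const 2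
  have hs1 : Summable fun k => a k * b k :=
    Summable.of_nonneg_of_le (fun k => mul_nonneg (ha k) (hb k)) hpt hsum
  refine ⟨hs1, ?_⟩
  calc ∑' k, a k * b k ≤ ∑' k, (a k ^ 2 / s + s * b k ^ 2) / 2 := Summable.tsum_le_tsum hpt hs1 hsum
    _ = ((∑' k, a k ^ 2) / s + s * ∑' k, b k ^ 2) / 2 := by
        rw [tsum_div_const, Summable.tsum_add (hsa.div_const s) (hsb.mul_left s), tsum_div_const,
          tsum_mul_left]


lemma sq_le_of_lt_of_le_one {x d : ℝ} (hx : 0 ≤ x) (h : x < d) (h1 : d ≤ 1) :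
    x ^ 2 ≤ d := by nlinarith

set_option maxHeartbeats 1000000 in
/-- The key continuity estimate: the Lindblad-form expression is continuous in the
graph norm of `M`, jointly in both vectors. -/
lemma lindblad_pair_est [CompleteSpace T] (Mo : TraceClassModel H T) (M : H →ₗ.[ℂ] H)
    (Lk : ℕ → M.domain →ₗ[ℂ] H)
    (hSumm : ∀ φ ψ : M.domain, Summable fun k => Mo.rankOne (Lk k φ) (Lk k ψ))
    (hnormsq : ∀ φ : M.domain, (Summable fun k => ‖Lk k φ‖ ^ 2) ∧
      ∑' k, ‖Lk k φ‖ ^ 2 = 2 * (⟪(φ : H), M φ⟫_ℂ).re)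
    (φ ψ : M.domain) {ε : ℝ} (hε : 0 < ε) :
    ∃ δ : ℝ, 0 < δ ∧ ∀ φ' ψ' : M.domain,
      ‖(φ : H) - (φ' : H)‖ + ‖M φ - M φ'‖ < δ →
      ‖(ψ : H) - (ψ' : H)‖ + ‖M ψ - M ψ'‖ < δ →
      ‖Mo.rankOne (φ : H) (ψ : H) - Mo.rankOne (φ' : H) (ψ' : H)‖ +
      ‖((∑' k, Mo.rankOne (Lk k φ) (Lk k ψ)) - Mo.rankOne (M φ) (ψ : H)
          - Mo.rankOne (φ : H) (M ψ))
        - ((∑' k, Mo.rankOne (Lk k φ') (Lk k ψ')) - Mo.rankOne (M φ') (ψ' : H)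
          - Mo.rankOne (φ' : H) (M ψ'))‖ < ε := by
  -- the ℓ² bound on the L_k
  have hLsq : ∀ χ : M.domain, ∑' k, ‖Lk k χ‖ ^ 2 ≤ (‖(χ : H)‖ + ‖M χ‖) ^ 2 := by
    intro χ
    rw [(hnormsq χ).2]
    have h1 : (⟪(χ : H), M χ⟫_ℂ).re ≤ ‖(χ : H)‖ * ‖M χ‖ := by
      refine (Complex.re_le_norm _).trans ?_
      exact norm_inner_le_norm _ _
    nlinarith [norm_nonneg (χ : H), norm_nonneg (M χ), sq_nonneg (‖(χ : H)‖ - ‖M χ‖)]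
  set nφ := ‖(φ : H)‖ with hnφ
  set mφ := ‖M φ‖ with hmφ
  set nψ := ‖(ψ : H)‖ with hnψ
  set mψ := ‖M ψ‖ with hmψ
  have hnφ0 : 0 ≤ nφ := norm_nonneg _
  have hmφ0 : 0 ≤ mφ := norm_nonneg _
  have hnψ0 : 0 ≤ nψ := norm_nonneg _
  have hmψ0 : 0 ≤ mψ := norm_nonneg _
  set C0 : ℝ := 2 * nψ + mψ + 2 * nφ + mφ + 3 with hC0def
  set K2 : ℝ := ((nψ + mψ) ^ 2 + (nφ + mφ + 2) ^ 2 + 2) / 2 with hK2def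
  set C : ℝ := C0 + K2 + 1 with hCdef
  have hC0pos : 0 < C0 := by positivity
  have hK2pos : 0 < K2 := by positivity
  have hCpos : 0 < C := by positivity
  set δ : ℝ := min 1 ((ε / (2 * C)) ^ 2) with hδdef
  have hδpos : 0 < δ := lt_min one_pos (by positivity)
  have hδ1 : δ ≤ 1 := min_le_left _ _
  set s : ℝ := Real.sqrt δ with hsdef
  have hspos : 0 < s := Real.sqrt_pos.2 hδpos
  have hss : s * s = δ := Real.mul_self_sqrt hδpos.le
  have hs1 : s ≤ 1 := by nlinarith
  have hδs : δ ≤ s := by nlinarith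
  have hsε : s * (2 * C) ≤ ε := by
    have h1 : s ≤ ε / (2 * C) := by
      rw [hsdef]
      calc Real.sqrt δ ≤ Real.sqrt ((ε / (2 * C)) ^ 2) :=
            Real.sqrt_le_sqrt (min_le_right _ _)
        _ = ε / (2 * C) := Real.sqrt_sq (by positivity)
    exact (le_div_iff₀ (by positivity : (0:ℝ) < 2 * C)).1 h1
  refine ⟨δ, hδpos, ?_⟩
  intro φ' ψ' ha hb
  set p1 := ‖(φ : H) - (φ' : H)‖ with hp1
  set p2 := ‖M φ - M φ'‖ with hp2
  set q1 := ‖(ψ : H) - (ψ' : H)‖ with hq1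
  set q2 := ‖M ψ - M ψ'‖ with hq2
  have hp10 : 0 ≤ p1 := norm_nonneg _
  have hp20 : 0 ≤ p2 := norm_nonneg _
  have hq10 : 0 ≤ q1 := norm_nonneg _
  have hq20 : 0 ≤ q2 := norm_nonneg _
  have hφ' : ‖(φ' : H)‖ ≤ nφ + 1 := by
    have h1 : ‖(φ' : H)‖ - ‖(φ : H)‖ ≤ ‖(φ' : H) - (φ : H)‖ := norm_sub_norm_le _ _
    rw [norm_sub_rev] at h1
    linarith
  have hMφ' : ‖M φ'‖ ≤ mφ + 1 := by
    have h1 : ‖M φ'‖ - ‖M φ‖ ≤ ‖M φ' - M φ‖ := norm_sub_norm_le _ _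
    rw [norm_sub_rev] at h1
    linarith
  -- ℓ² bounds
  have hsqψ : ∑' k, ‖Lk k ψ‖ ^ 2 ≤ (nψ + mψ) ^ 2 := hLsq ψ
  have hsqφ' : ∑' k, ‖Lk k φ'‖ ^ 2 ≤ (nφ + mφ + 2) ^ 2 := by
    refine (hLsq φ').trans ?_
    exact pow_le_pow_left₀ (by positivity) (by linarith) 2
  have hcoesub : ((φ - φ' : M.domain) : H) = (φ : H) - (φ' : H) :=
    AddSubgroupClass.coe_sub _ _
  have hcoesub' : ((ψ - ψ' : M.domain) : H) = (ψ : H) - (ψ' : H) :=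
    AddSubgroupClass.coe_sub _ _
  have hsqdφ : ∑' k, ‖Lk k (φ - φ')‖ ^ 2 ≤ (p1 + p2) ^ 2 := by
    have h1 := hLsq (φ - φ')
    rwa [hcoesub, M.map_sub] at h1
  have hsqdψ : ∑' k, ‖Lk k (ψ - ψ')‖ ^ 2 ≤ (q1 + q2) ^ 2 := by
    have h1 := hLsq (ψ - ψ')
    rwa [hcoesub', M.map_sub] at h1
  clear_value s δ C K2 C0 p1 p2 q1 q2 nφ mφ nψ mψ
  -- summability of products
  have hCS1 := tsum_mul_le_of_sq (a := fun k => ‖Lk k (φ - φ')‖) (b := fun k => ‖Lk k ψ‖)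
    (fun k => norm_nonneg _) (fun k => norm_nonneg _) (hnormsq _).1 (hnormsq _).1 hspos
  have hCS2 := tsum_mul_le_of_sq (a := fun k => ‖Lk k (ψ - ψ')‖) (b := fun k => ‖Lk k φ'‖)
    (fun k => norm_nonneg _) (fun k => norm_nonneg _) (hnormsq _).1 (hnormsq _).1 hspos
  have hsml : Summable fun k => ‖Lk k (φ - φ')‖ * ‖Lk k ψ‖ := hCS1.1
  have hsmr : Summable fun k => ‖Lk k φ'‖ * ‖Lk k (ψ - ψ')‖ := by
    have := hCS2.1
    simpa [mul_comm] using this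
  -- pointwise bound on differences of rank-one terms
  have hptnorm : ∀ k, ‖Mo.rankOne (Lk k φ) (Lk k ψ) - Mo.rankOne (Lk k φ') (Lk k ψ')‖
      ≤ ‖Lk k (φ - φ')‖ * ‖Lk k ψ‖ + ‖Lk k φ'‖ * ‖Lk k (ψ - ψ')‖ := by
    intro k
    have h1 := norm_rankOne_sub_le Mo (Lk k φ) (Lk k ψ) (Lk k φ') (Lk k ψ')
    simpa [map_sub] using h1
  have hnormAB : Summable fun k =>
      ‖Mo.rankOne (Lk k φ) (Lk k ψ) - Mo.rankOne (Lk k φ') (Lk k ψ')‖ :=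
    Summable.of_nonneg_of_le (fun k => norm_nonneg _) hptnorm (hsml.add hsmr)
  -- bounds for the division terms
  have hda : (p1 + p2) ^ 2 / s ≤ s := by
    rw [div_le_iff₀ hspos, hss]
    exact sq_le_of_lt_of_le_one (by linarith) ha hδ1
  have hdb : (q1 + q2) ^ 2 / s ≤ s := by
    rw [div_le_iff₀ hspos, hss]
    exact sq_le_of_lt_of_le_one (by linarith) hb hδ1
  -- the tsum difference bound
  have hT4 : ‖(∑' k, Mo.rankOne (Lk k φ) (Lk k ψ)) - ∑' k, Mo.rankOne (Lk k φ') (Lk k ψ')‖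
      ≤ s * K2 := by
    have hsub : (∑' k, Mo.rankOne (Lk k φ) (Lk k ψ)) - ∑' k, Mo.rankOne (Lk k φ') (Lk k ψ')
        = ∑' k, (Mo.rankOne (Lk k φ) (Lk k ψ) - Mo.rankOne (Lk k φ') (Lk k ψ')) :=
      (Summable.tsum_sub (hSumm φ ψ) (hSumm φ' ψ')).symm
    rw [hsub]
    have hb1 : ∑' k, ‖Lk k (φ - φ')‖ * ‖Lk k ψ‖
        ≤ ((p1 + p2) ^ 2 / s + s * (nψ + mψ) ^ 2) / 2 := by
      refine hCS1.2.trans ?_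
      gcongr
    have hb2 : ∑' k, ‖Lk k (ψ - ψ')‖ * ‖Lk k φ'‖
        ≤ ((q1 + q2) ^ 2 / s + s * (nφ + mφ + 2) ^ 2) / 2 := by
      refine hCS2.2.trans ?_
      gcongr
    calc ‖∑' k, (Mo.rankOne (Lk k φ) (Lk k ψ) - Mo.rankOne (Lk k φ') (Lk k ψ'))‖
        ≤ ∑' k, ‖Mo.rankOne (Lk k φ) (Lk k ψ) - Mo.rankOne (Lk k φ') (Lk k ψ')‖ :=
          norm_tsum_le_tsum_norm hnormAB
      _ ≤ ∑' k, (‖Lk k (φ - φ')‖ * ‖Lk k ψ‖ + ‖Lk k φ'‖ * ‖Lk k (ψ - ψ')‖) :=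
          Summable.tsum_le_tsum hptnorm hnormAB (hsml.add hsmr)
      _ = (∑' k, ‖Lk k (φ - φ')‖ * ‖Lk k ψ‖) + ∑' k, ‖Lk k (ψ - ψ')‖ * ‖Lk k φ'‖ := by
          rw [Summable.tsum_add hsml hsmr]
          congr 1
          exact tsum_congr fun k => mul_comm _ _
      _ ≤ ((p1 + p2) ^ 2 / s + s * (nψ + mψ) ^ 2) / 2
          + ((q1 + q2) ^ 2 / s + s * (nφ + mφ + 2) ^ 2) / 2 := add_le_add hb1 hb2
      _ ≤ (s + s * (nψ + mψ) ^ 2) / 2 + (s + s * (nφ + mφ + 2) ^ 2) / 2 := by gcongr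
      _ = s * K2 := by rw [hK2def]; ring
  -- the three rank-one difference bounds
  have hT1 : ‖Mo.rankOne (φ : H) (ψ : H) - Mo.rankOne (φ' : H) (ψ' : H)‖
      ≤ δ * (nψ + nφ + 1) := by
    refine (norm_rankOne_sub_le Mo _ _ _ _).trans ?_
    rw [← hp1, ← hnψ, ← hq1]
    have h1 : p1 * nψ ≤ δ * nψ := mul_le_mul_of_nonneg_right (by linarith) hnψ0
    have h2 : ‖(φ' : H)‖ * q1 ≤ (nφ + 1) * δ :=
      mul_le_mul hφ' (by linarith) hq10 (by linarith)
    have h3 : δ * (nψ + nφ + 1) = δ * nψ + (nφ + 1) * δ := by ring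
    linarith
  have hT2 : ‖Mo.rankOne (M φ) (ψ : H) - Mo.rankOne (M φ') (ψ' : H)‖
      ≤ δ * (nψ + mφ + 1) := by
    refine (norm_rankOne_sub_le Mo _ _ _ _).trans ?_
    rw [← hp2, ← hnψ, ← hq1]
    have h1 : p2 * nψ ≤ δ * nψ := mul_le_mul_of_nonneg_right (by linarith) hnψ0
    have h2 : ‖M φ'‖ * q1 ≤ (mφ + 1) * δ :=
      mul_le_mul hMφ' (by linarith) hq10 (by linarith)
    have h3 : δ * (nψ + mφ + 1) = δ * nψ + (mφ + 1) * δ := by ring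
    linarith
  have hT3 : ‖Mo.rankOne (φ : H) (M ψ) - Mo.rankOne (φ' : H) (M ψ')‖
      ≤ δ * (mψ + nφ + 1) := by
    refine (norm_rankOne_sub_le Mo _ _ _ _).trans ?_
    rw [← hp1, ← hmψ, ← hq2]
    have h1 : p1 * mψ ≤ δ * mψ := mul_le_mul_of_nonneg_right (by linarith) hmψ0
    have h2 : ‖(φ' : H)‖ * q2 ≤ (nφ + 1) * δ :=
      mul_le_mul hφ' (by linarith) hq20 (by linarith)
    have h3 : δ * (mψ + nφ + 1) = δ * mψ + (nφ + 1) * δ := by ring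
    linarith
  -- split the second norm
  have hsplit : ((∑' k, Mo.rankOne (Lk k φ) (Lk k ψ)) - Mo.rankOne (M φ) (ψ : H)
        - Mo.rankOne (φ : H) (M ψ))
      - ((∑' k, Mo.rankOne (Lk k φ') (Lk k ψ')) - Mo.rankOne (M φ') (ψ' : H)
        - Mo.rankOne (φ' : H) (M ψ'))
      = (((∑' k, Mo.rankOne (Lk k φ) (Lk k ψ)) - ∑' k, Mo.rankOne (Lk k φ') (Lk k ψ'))
          - (Mo.rankOne (M φ) (ψ : H) - Mo.rankOne (M φ') (ψ' : H)))
        - (Mo.rankOne (φ : H) (M ψ) - Mo.rankOne (φ' : H) (M ψ')) := by abel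
  have hN2 : ‖((∑' k, Mo.rankOne (Lk k φ) (Lk k ψ)) - Mo.rankOne (M φ) (ψ : H)
        - Mo.rankOne (φ : H) (M ψ))
      - ((∑' k, Mo.rankOne (Lk k φ') (Lk k ψ')) - Mo.rankOne (M φ') (ψ' : H)
        - Mo.rankOne (φ' : H) (M ψ'))‖
      ≤ s * K2 + δ * (nψ + mφ + 1) + δ * (mψ + nφ + 1) := by
    rw [hsplit]
    refine (norm_sub_le _ _).trans ?_
    have h1 := norm_sub_le ((∑' k, Mo.rankOne (Lk k φ) (Lk k ψ))
      - ∑' k, Mo.rankOne (Lk k φ') (Lk k ψ'))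
      (Mo.rankOne (M φ) (ψ : H) - Mo.rankOne (M φ') (ψ' : H))
    linarith
  -- conclusion
  rw [hCdef] at hsε
  have m1 : δ * (nψ + nφ + 1) ≤ s * (nψ + nφ + 1) :=
    mul_le_mul_of_nonneg_right hδs (by linarith)
  have m2 : δ * (nψ + mφ + 1) ≤ s * (nψ + mφ + 1) :=
    mul_le_mul_of_nonneg_right hδs (by linarith)
  have m3 : δ * (mψ + nφ + 1) ≤ s * (mψ + nφ + 1) :=
    mul_le_mul_of_nonneg_right hδs (by linarith)
  rw [hC0def] at hsε
  have e1 : 0 ≤ s * nψ := mul_nonneg hspos.le hnψ0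
  have e2 : 0 ≤ s * mψ := mul_nonneg hspos.le hmψ0
  have e3 : 0 ≤ s * nφ := mul_nonneg hspos.le hnφ0
  have e4 : 0 ≤ s * mφ := mul_nonneg hspos.le hmφ0
  have e5 : 0 ≤ s * K2 := mul_nonneg hspos.le hK2pos.le
  have e6 : s * (2 * (2 * nψ + mψ + 2 * nφ + mφ + 3 + K2 + 1))
      = 4 * (s * nψ) + 2 * (s * mψ) + 4 * (s * nφ) + 2 * (s * mφ) + 8 * s
        + 2 * (s * K2) := by ring
  have e7 : s * (nψ + nφ + 1) = s * nψ + s * nφ + s := by ring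
  have e8 : s * (nψ + mφ + 1) = s * nψ + s * mφ + s := by ring
  have e9 : s * (mψ + nφ + 1) = s * mψ + s * nφ + s := by ring
  linarith

end Aux



/-- Theorem 1, second half: if the generator `L` of a trace-preserving
QDS is in generalized standard form — with `M` closed, densely defined, generating a
contraction semigroup, operators `L_k` on `D(M)` relatively bounded w.r.t. `M`,
`L(ρ) = ∑_k L_k ρ L_k† − Mρ − ρM†` on the core `D_0` of finite-rank operators built from
`D(M)`, and `∑_k ‖L_k φ‖² = 2 Re⟨φ, Mφ⟩` — then the QDS is matrix normal: there is an
orthonormal basis `{e_k}` of `H` such that `D_e²` is a core for `L`. -/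
theorem matrixNormal_of_generalized_standard_form [TopologicalSpace.SeparableSpace H]
    (S : QDS Mod) (G : S.Generator)
    (M : H →ₗ.[ℂ] H) (hdense : Dense (M.domain : Set H)) (hclosed : M.IsClosed)
    (hgen : GeneratesContractionSemigroupPMap M)
    (Lk : ℕ → M.domain →ₗ[ℂ] H)
    (hrb : ∀ k, ∃ a b : ℝ, ∀ φ : M.domain, ‖Lk k φ‖ ≤ a * ‖(φ : H)‖ + b * ‖M φ‖)
    (hSumm : ∀ φ ψ : M.domain, Summable fun k => Mod.rankOne (Lk k φ) (Lk k ψ))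
    (hform : ∀ (N : ℕ) (φ ψ : Fin N → M.domain),
      (∑ n, Mod.rankOne (φ n) (ψ n)) ∈ G.Dom ∧
      G.L (∑ n, Mod.rankOne (φ n) (ψ n)) =
        ∑ n, ((∑' k, Mod.rankOne (Lk k (φ n)) (Lk k (ψ n)))
          - Mod.rankOne (M (φ n)) (ψ n) - Mod.rankOne (φ n) (M (ψ n))))
    (hcore : IsCoreFor G.L G.Dom
      {ρ : T | ∃ (N : ℕ) (φ ψ : Fin N → M.domain), ρ = ∑ n, Mod.rankOne (φ n) (ψ n)})
    (hnormsq : ∀ φ : M.domain, (Summable fun k => ‖Lk k φ‖ ^ 2) ∧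
      ∑' k, ‖Lk k φ‖ ^ 2 = 2 * (⟪(φ : H), M φ⟫_ℂ).re) :
    ∃ (ι : Type) (_ : Countable ι) (e : ι → H), G.MatrixNormal e := by
  classical
  haveI : SecondCountableTopology H := UniformSpace.secondCountable_of_separable H
  haveI : Nonempty ↥(M.graph : Set (H × H)) := ⟨⟨0, M.graph.zero_mem⟩⟩
  -- a countable dense subset of the graph of M
  obtain ⟨sg, hsgc, hsgd⟩ := TopologicalSpace.exists_countable_dense ↥(M.graph : Set (H × H))
  obtain ⟨g0, hg0⟩ := hsgc.exists_eq_range hsgd.nonempty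
  have hu0 : ∀ n : ℕ, ∃ y : M.domain, ((y : H), M y) = ((g0 n : ↥(M.graph : Set (H × H))) : H × H) :=
    fun n => M.mem_graph_iff'.1 (g0 n).2
  choose u hu using hu0
  -- graph-norm density of the u's in M.domain
  have hdense_u : ∀ (χ : M.domain) (δ : ℝ), 0 < δ →
      ∃ n, ‖(χ : H) - (u n : H)‖ + ‖M χ - M (u n)‖ < δ := by
    intro χ δ hδ
    have h1 : (((χ : H), M χ) : H × H) ∈ (M.graph : Set (H × H)) := M.mem_graph χ
    have h2 : (⟨_, h1⟩ : ↥(M.graph : Set (H × H))) ∈ closure sg := hsgd _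
    rw [Metric.mem_closure_iff] at h2
    obtain ⟨q, hq, hdist⟩ := h2 (δ / 2) (by linarith)
    rw [hg0] at hq
    obtain ⟨n, rfl⟩ := hq
    rw [Subtype.dist_eq, ← hu n, Prod.dist_eq] at hdist
    have h3 : dist (χ : H) (u n : H) < δ / 2 := lt_of_le_of_lt (le_max_left _ _) hdist
    have h4 : dist (M χ) (M (u n)) < δ / 2 := lt_of_le_of_lt (le_max_right _ _) hdist
    rw [dist_eq_norm] at h3 h4
    exact ⟨n, by linarith⟩
  -- Gram-Schmidt
  set v : ℕ → H := fun n => (u n : H) with hv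
  have hv_mem : ∀ n, v n ∈ M.domain := fun n => (u n).2
  have hspan_v_le : Submodule.span ℂ (Set.range v) ≤ M.domain :=
    Submodule.span_le.2 (Set.range_subset_iff.2 hv_mem)
  set e : {n : ℕ // InnerProductSpace.gramSchmidtNormed ℂ v n ≠ 0} → H :=
    fun i => InnerProductSpace.gramSchmidtNormed ℂ v (i : ℕ) with he
  have horth : Orthonormal ℂ e := InnerProductSpace.gramSchmidtNormed_orthonormal' v
  -- span equality
  have hspan : Submodule.span ℂ (Set.range e) = Submodule.span ℂ (Set.range v) := by
    apply le_antisymm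
    · apply Submodule.span_le.2
      rintro _ ⟨i, rfl⟩
      have h1 : e i ∈ Submodule.span ℂ (Set.range (InnerProductSpace.gramSchmidtNormed ℂ v)) :=
        Submodule.subset_span ⟨(i : ℕ), rfl⟩
      rwa [InnerProductSpace.span_gramSchmidtNormed_range, InnerProductSpace.span_gramSchmidt] at h1
    · apply Submodule.span_le.2
      rintro _ ⟨n, rfl⟩
      have h1 : v n ∈ Submodule.span ℂ (Set.range (InnerProductSpace.gramSchmidtNormed ℂ v)) := by
        rw [InnerProductSpace.span_gramSchmidtNormed_range, InnerProductSpace.span_gramSchmidt]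
        exact Submodule.subset_span ⟨n, rfl⟩
      have h2 : Submodule.span ℂ (Set.range (InnerProductSpace.gramSchmidtNormed ℂ v))
          ≤ Submodule.span ℂ (Set.range e) := by
        apply Submodule.span_le.2
        rintro _ ⟨m, rfl⟩
        by_cases hm : InnerProductSpace.gramSchmidtNormed ℂ v m = 0
        · rw [hm]; exact Submodule.zero_mem _
        · exact Submodule.subset_span ⟨⟨m, hm⟩, rfl⟩
      exact h2 h1
  -- the basis vectors lie in the domain of M
  have he_mem : ∀ i, e i ∈ M.domain := by
    intro i
    have h1 : e i ∈ Submodule.span ℂ (Set.range e) := Submodule.subset_span ⟨i, rfl⟩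
    rw [hspan] at h1
    exact hspan_v_le h1
  -- density of the span
  have hd1 : ∀ x ∈ M.domain, x ∈ closure (Set.range v) := by
    intro x hx
    rw [Metric.mem_closure_iff]
    intro r hr
    obtain ⟨n, hn⟩ := hdense_u ⟨x, hx⟩ r hr
    refine ⟨v n, ⟨n, rfl⟩, ?_⟩
    rw [dist_eq_norm]
    have h0 := norm_nonneg (M ⟨x, hx⟩ - M (u n))
    exact lt_of_le_of_lt (by linarith) hn
  have hdense_e : Dense ((Submodule.span ℂ (Set.range e) : Submodule ℂ H) : Set H) := by
    have hsub : (M.domain : Set H)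
        ⊆ closure ((Submodule.span ℂ (Set.range e) : Submodule ℂ H) : Set H) := by
      intro x hx
      refine closure_mono ?_ (hd1 x hx)
      rintro _ ⟨n, rfl⟩
      show v n ∈ (Submodule.span ℂ (Set.range e) : Submodule ℂ H)
      rw [hspan]
      exact Submodule.subset_span ⟨n, rfl⟩
    have hh : Dense (closure ((Submodule.span ℂ (Set.range e) : Submodule ℂ H) : Set H)) :=
      hdense.mono hsub
    rwa [dense_closure] at hh
  -- the set D₀
  set D0 : Set T :=
    {ρ : T | ∃ (N : ℕ) (φ ψ : Fin N → M.domain), ρ = ∑ n, Mod.rankOne (φ n) (ψ n)} with hD0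
  have hDe2_sub : Mod.De2 e ⊆ D0 := by
    intro ρ hρ
    exact span_matrixUnits_subset_D0 Mod M e he_mem hρ
  refine ⟨{n : ℕ // InnerProductSpace.gramSchmidtNormed ℂ v n ≠ 0}, inferInstance, e, ⟨horth, hdense_e⟩,
    fun ρ hρ => hcore.1 (hDe2_sub hρ), ?_⟩
  -- the approximation property
  intro ρ hρ ε hε
  obtain ⟨σ, hσD, hσclose⟩ := hcore.2 ρ hρ (ε / 2) (by linarith)
  obtain ⟨N, φv, ψv, rfl⟩ := hσD
  -- choose graph-close approximants from the u's
  have hpair : ∀ n : Fin N, ∃ δ : ℝ, 0 < δ ∧ ∀ φ' ψ' : M.domain,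
      ‖(φv n : H) - (φ' : H)‖ + ‖M (φv n) - M φ'‖ < δ →
      ‖(ψv n : H) - (ψ' : H)‖ + ‖M (ψv n) - M ψ'‖ < δ →
      ‖Mod.rankOne (φv n : H) (ψv n : H) - Mod.rankOne (φ' : H) (ψ' : H)‖ +
      ‖((∑' k, Mod.rankOne (Lk k (φv n)) (Lk k (ψv n))) - Mod.rankOne (M (φv n)) (ψv n : H)
          - Mod.rankOne (φv n : H) (M (ψv n)))
        - ((∑' k, Mod.rankOne (Lk k φ') (Lk k ψ')) - Mod.rankOne (M φ') (ψ' : H)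
          - Mod.rankOne (φ' : H) (M ψ'))‖ < ε / (2 * (N + 1)) :=
    fun n => lindblad_pair_est Mod M Lk hSumm hnormsq (φv n) (ψv n) (by positivity)
  choose δf hδf hest using hpair
  choose kφ hkφ using fun n : Fin N => hdense_u (φv n) (δf n) (hδf n)
  choose kψ hkψ using fun n : Fin N => hdense_u (ψv n) (δf n) (hδf n)
  refine ⟨∑ n, Mod.rankOne (u (kφ n)) (u (kψ n)), ?_, ?_⟩
  · -- membership in De2
    show _ ∈ (Submodule.span ℂ _ : Submodule ℂ T)
    refine Submodule.sum_mem _ fun n _ => ?_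
    refine rankOne_mem_span_matrixUnits Mod e ?_ ?_
    · rw [hspan]; exact Submodule.subset_span ⟨kφ n, rfl⟩
    · rw [hspan]; exact Submodule.subset_span ⟨kψ n, rfl⟩
  · -- the graph-norm estimate
    have hLσ := (hform N φv ψv).2
    have hLσ' := (hform N (fun n => u (kφ n)) (fun n => u (kψ n))).2
    have hd1' : (∑ n, Mod.rankOne (φv n) (ψv n)) - ∑ n, Mod.rankOne (u (kφ n)) (u (kψ n))
        = ∑ n, (Mod.rankOne (φv n) (ψv n) - Mod.rankOne (u (kφ n)) (u (kψ n))) := by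
      exact (Finset.sum_sub_distrib ..).symm
    have hd2' : G.L (∑ n, Mod.rankOne (φv n) (ψv n))
          - G.L (∑ n, Mod.rankOne (u (kφ n)) (u (kψ n)))
        = ∑ n, (((∑' k, Mod.rankOne (Lk k (φv n)) (Lk k (ψv n)))
              - Mod.rankOne (M (φv n)) (ψv n : H) - Mod.rankOne (φv n : H) (M (ψv n)))
            - ((∑' k, Mod.rankOne (Lk k (u (kφ n))) (Lk k (u (kψ n))))
              - Mod.rankOne (M (u (kφ n))) (u (kψ n) : H)
              - Mod.rankOne (u (kφ n) : H) (M (u (kψ n))))) := by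
      rw [hLσ, hLσ']
      exact (Finset.sum_sub_distrib ..).symm
    have hkey : ‖(∑ n, Mod.rankOne (φv n) (ψv n)) - ∑ n, Mod.rankOne (u (kφ n)) (u (kψ n))‖
        + ‖G.L (∑ n, Mod.rankOne (φv n) (ψv n))
            - G.L (∑ n, Mod.rankOne (u (kφ n)) (u (kψ n)))‖ ≤ ε / 2 := by
      rw [hd1', hd2']
      have h1 := norm_sum_le Finset.univ
        fun n : Fin N => Mod.rankOne (φv n) (ψv n) - Mod.rankOne (u (kφ n)) (u (kψ n))
      have h2 := norm_sum_le Finset.univ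
        fun n : Fin N => ((∑' k, Mod.rankOne (Lk k (φv n)) (Lk k (ψv n)))
              - Mod.rankOne (M (φv n)) (ψv n : H) - Mod.rankOne (φv n : H) (M (ψv n)))
            - ((∑' k, Mod.rankOne (Lk k (u (kφ n))) (Lk k (u (kψ n))))
              - Mod.rankOne (M (u (kφ n))) (u (kψ n) : H)
              - Mod.rankOne (u (kφ n) : H) (M (u (kψ n))))
      have h3 : (∑ n : Fin N, ‖Mod.rankOne (φv n) (ψv n)
            - Mod.rankOne (u (kφ n)) (u (kψ n))‖)
          + ∑ n : Fin N, ‖((∑' k, Mod.rankOne (Lk k (φv n)) (Lk k (ψv n)))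
              - Mod.rankOne (M (φv n)) (ψv n : H) - Mod.rankOne (φv n : H) (M (ψv n)))
            - ((∑' k, Mod.rankOne (Lk k (u (kφ n))) (Lk k (u (kψ n))))
              - Mod.rankOne (M (u (kφ n))) (u (kψ n) : H)
              - Mod.rankOne (u (kφ n) : H) (M (u (kψ n))))‖ ≤ ε / 2 := by
        rw [← Finset.sum_add_distrib]
        have h4 : ∀ n : Fin N, ‖Mod.rankOne (φv n) (ψv n)
              - Mod.rankOne (u (kφ n)) (u (kψ n))‖
            + ‖((∑' k, Mod.rankOne (Lk k (φv n)) (Lk k (ψv n)))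
              - Mod.rankOne (M (φv n)) (ψv n : H) - Mod.rankOne (φv n : H) (M (ψv n)))
            - ((∑' k, Mod.rankOne (Lk k (u (kφ n))) (Lk k (u (kψ n))))
              - Mod.rankOne (M (u (kφ n))) (u (kψ n) : H)
              - Mod.rankOne (u (kφ n) : H) (M (u (kψ n))))‖ ≤ ε / (2 * (N + 1)) :=
          fun n => le_of_lt (hest n (u (kφ n)) (u (kψ n)) (hkφ n) (hkψ n))
        refine (Finset.sum_le_sum fun n _ => h4 n).trans ?_
        rw [Finset.sum_const, Finset.card_univ, Fintype.card_fin, nsmul_eq_mul]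
        rw [mul_div_assoc']
        rw [div_le_div_iff₀ (by positivity : (0:ℝ) < 2 * ((N:ℝ) + 1))
          (by norm_num : (0:ℝ) < 2)]
        have hN : (0:ℝ) ≤ (N : ℝ) := Nat.cast_nonneg N
        nlinarith [hε.le]
      linarith
    have t1 : ‖ρ - ∑ n, Mod.rankOne (u (kφ n)) (u (kψ n))‖
        ≤ ‖ρ - ∑ n, Mod.rankOne (φv n) (ψv n)‖
          + ‖(∑ n, Mod.rankOne (φv n) (ψv n)) - ∑ n, Mod.rankOne (u (kφ n)) (u (kψ n))‖ := by
      have := norm_sub_le (ρ - ∑ n, Mod.rankOne (φv n) (ψv n))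
        ((∑ n, Mod.rankOne (u (kφ n)) (u (kψ n))) - ∑ n, Mod.rankOne (φv n) (ψv n))
      rw [show ρ - ∑ n, Mod.rankOne (φv n) (ψv n)
          - ((∑ n, Mod.rankOne (u (kφ n)) (u (kψ n))) - ∑ n, Mod.rankOne (φv n) (ψv n))
          = ρ - ∑ n, Mod.rankOne (u (kφ n)) (u (kψ n)) by abel] at this
      rw [norm_sub_rev ((∑ n, Mod.rankOne (u (kφ n)) (u (kψ n))))] at this
      exact this
    have t2 : ‖G.L ρ - G.L (∑ n, Mod.rankOne (u (kφ n)) (u (kψ n)))‖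
        ≤ ‖G.L ρ - G.L (∑ n, Mod.rankOne (φv n) (ψv n))‖
          + ‖G.L (∑ n, Mod.rankOne (φv n) (ψv n))
              - G.L (∑ n, Mod.rankOne (u (kφ n)) (u (kψ n)))‖ := by
      have := norm_sub_le (G.L ρ - G.L (∑ n, Mod.rankOne (φv n) (ψv n)))
        (G.L (∑ n, Mod.rankOne (u (kφ n)) (u (kψ n)))
          - G.L (∑ n, Mod.rankOne (φv n) (ψv n)))
      rw [show G.L ρ - G.L (∑ n, Mod.rankOne (φv n) (ψv n))
          - (G.L (∑ n, Mod.rankOne (u (kφ n)) (u (kψ n)))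
            - G.L (∑ n, Mod.rankOne (φv n) (ψv n)))
          = G.L ρ - G.L (∑ n, Mod.rankOne (u (kφ n)) (u (kψ n))) by abel] at this
      rw [norm_sub_rev (G.L (∑ n, Mod.rankOne (u (kφ n)) (u (kψ n))))] at this
      exact this
    linarith

end
end

section
/- Let L be the generator of a trace-preserving quantum dynamical semigroup on 𝔗(H), let M be an operator with dense domain D(M) ⊇ D_e and let (L_k) be a countable family of operators defined on D_e such that L(ρ) = Σ_k L_k ρ L_k† − Mρ − ρM† for all ρ ∈ D_e², where D_e² ⊆ D(L). Then for every φ ∈ D_e one has Σ_k ‖L_k φ‖² = ⟨φ, Mφ⟩ + ⟨Mφ, φ⟩ = 2 Re⟨φ, Mφ⟩; in particular the sum Σ_k ‖L_k φ‖² is finite. -/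
open Filter Set
open scoped InnerProductSpace ComplexConjugate ComplexOrder Topology ComplexInnerProductSpace

noncomputable section

variable {H T : Type*}

variable [NormedAddCommGroup H] [InnerProductSpace ℂ H] [CompleteSpace H]
  [NormedAddCommGroup T] [NormedSpace ℂ T] [CompleteSpace T]

variable {Mod : TraceClassModel H T}

/-- proof of Equation (4): if the generator `L` of a trace-preserving QDS
satisfies `L(ρ) = ∑_k L_k ρ L_k† − Mρ − ρM†` for all `ρ ∈ D_e²` (with `D_e² ⊆ D(L)`,
`M` densely defined with `D_e ⊆ D(M)`, and `L_k` defined on `D_e`), then for every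
`φ ∈ D_e` the sum `∑_k ‖L_k φ‖²` is finite and equals
`⟨φ, Mφ⟩ + ⟨Mφ, φ⟩ = 2 Re⟨φ, Mφ⟩`. -/
theorem sum_norm_sq_eq_twice_re_inner [TopologicalSpace.SeparableSpace H]
    (S : QDS Mod) (G : S.Generator) {ι : Type*} (e : ι → H) (he : IsONBasis e)
    (M : H →ₗ.[ℂ] H) (hdense : Dense (M.domain : Set H))
    (hDe : Submodule.span ℂ (Set.range e) ≤ M.domain)
    (Lk : ℕ → (Submodule.span ℂ (Set.range e) : Submodule ℂ H) →ₗ[ℂ] H)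
    (hSumm : ∀ φ ψ : Submodule.span ℂ (Set.range e),
      Summable fun k => Mod.rankOne (Lk k φ) (Lk k ψ))
    (hform : ∀ φ ψ : Submodule.span ℂ (Set.range e),
      Mod.rankOne (φ : H) (ψ : H) ∈ G.Dom ∧
      G.L (Mod.rankOne (φ : H) (ψ : H)) =
        (∑' k, Mod.rankOne (Lk k φ) (Lk k ψ))
          - Mod.rankOne (M ⟨(φ : H), hDe φ.2⟩) (ψ : H)
          - Mod.rankOne (φ : H) (M ⟨(ψ : H), hDe ψ.2⟩)) :
    ∀ φ : Submodule.span ℂ (Set.range e),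
      (Summable fun k => ‖Lk k φ‖ ^ 2) ∧
      ∑' k, ‖Lk k φ‖ ^ 2 = 2 * (⟪(φ : H), M ⟨(φ : H), hDe φ.2⟩⟫_ℂ).re ∧
      ((∑' k, ‖Lk k φ‖ ^ 2 : ℝ) : ℂ) =
        ⟪(φ : H), M ⟨(φ : H), hDe φ.2⟩⟫_ℂ + ⟪M ⟨(φ : H), hDe φ.2⟩, (φ : H)⟫_ℂ := by

  intro φ
  obtain ⟨hmem, hL⟩ := hform φ φ
  set a : ℂ := ⟪(φ : H), M ⟨(φ : H), hDe φ.2⟩⟫_ℂ with ha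
  -- trace of the generator vanishes on the domain
  have htr0 : Mod.trace (G.L (Mod.rankOne (φ : H) (φ : H))) = 0 := by
    have hd := G.hasGenDerivAt _ hmem
    have h1 : Tendsto (fun t : ℝ => Mod.trace ((t : ℂ)⁻¹ •
        (S.map t (Mod.rankOne (φ : H) (φ : H)) - Mod.rankOne (φ : H) (φ : H))))
        (𝓝[>] 0) (𝓝 (Mod.trace (G.L (Mod.rankOne (φ : H) (φ : H))))) :=
      (Mod.trace.continuous.tendsto _).comp hd
    have h2 : (fun t : ℝ => Mod.trace ((t : ℂ)⁻¹ •
        (S.map t (Mod.rankOne (φ : H) (φ : H)) - Mod.rankOne (φ : H) (φ : H))))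
        =ᶠ[𝓝[>] (0:ℝ)] (fun _ => (0 : ℂ)) := by
      filter_upwards [self_mem_nhdsWithin] with t ht
      simp [map_smul, map_sub, S.trace_preserving t (le_of_lt ht)]
    exact (tendsto_nhds_unique (h1.congr' h2) tendsto_const_nhds)
  have hSφ := hSumm φ φ
  have htrk : ∀ k, Mod.trace (Mod.rankOne (Lk k φ) (Lk k φ)) = ((‖Lk k φ‖ ^ 2 : ℝ) : ℂ) := by
    intro k
    rw [Mod.trace_rankOne, inner_self_eq_norm_sq_to_K]
    norm_cast
  have hsumC : Summable fun k => ((‖Lk k φ‖ ^ 2 : ℝ) : ℂ) := by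
    have h := hSφ.map (Mod.trace : T →L[ℂ] ℂ) Mod.trace.continuous
    simp only [Function.comp_def] at h
    exact (summable_congr htrk).mp h
  have hsumR : Summable fun k => ‖Lk k φ‖ ^ 2 := by
    rwa [Complex.summable_ofReal] at hsumC
  have htsumC : Mod.trace (∑' k, Mod.rankOne (Lk k φ) (Lk k φ))
      = ((∑' k, ‖Lk k φ‖ ^ 2 : ℝ) : ℂ) := by
    rw [Mod.trace.map_tsum hSφ]
    rw [Complex.ofReal_tsum]
    exact tsum_congr htrk
  -- apply trace to the form
  have key : ((∑' k, ‖Lk k φ‖ ^ 2 : ℝ) : ℂ) = a + ⟪M ⟨(φ : H), hDe φ.2⟩, (φ : H)⟫_ℂ := by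
    have := congrArg Mod.trace hL
    rw [htr0, map_sub, map_sub, htsumC, Mod.trace_rankOne, Mod.trace_rankOne] at this
    have h := this.symm
    linear_combination h
  have hconj : ⟪M ⟨(φ : H), hDe φ.2⟩, (φ : H)⟫_ℂ = conj a := (inner_conj_symm _ _).symm
  have key2 : ((∑' k, ‖Lk k φ‖ ^ 2 : ℝ) : ℂ) = ((2 * a.re : ℝ) : ℂ) := by
    rw [key, hconj, Complex.add_conj]
  refine ⟨hsumR, ?_, ?_⟩
  · exact_mod_cast key2
  · rw [key, hconj]

end
end

section
/- Let M be a closed densely defined linear operator on a separable complex Hilbert space H. Then there exists an orthonormal basis {e_k} of H with e_k ∈ D(M) for all k, such that the finite linear span D_e of {e_k} is a core for M: for every φ ∈ D(M) and ε > 0 there is e ∈ D_e with ‖φ − e‖ ≤ ε and ‖Mφ − Me‖ ≤ ε. -/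
open Set Submodule InnerProductSpace

/-- every closed densely defined operator `M` on a separable complex
Hilbert space admits an orthonormal basis `{e_k}` contained in `D(M)` whose finite linear
span `D_e` is a core for `M`: every `φ ∈ D(M)` is approximated in graph norm by elements
of `D_e`. -/
theorem exists_orthonormalBasis_core {H : Type*} [NormedAddCommGroup H]
    [InnerProductSpace ℂ H] [CompleteSpace H] [TopologicalSpace.SeparableSpace H]
    (M : H →ₗ.[ℂ] H) (hdense : Dense (M.domain : Set H)) (hclosed : M.IsClosed) :
    ∃ (ι : Type) (_ : Countable ι) (e : ι → H),
      Orthonormal ℂ e ∧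
      Dense ((Submodule.span ℂ (Set.range e) : Submodule ℂ H) : Set H) ∧
      (∀ i, e i ∈ M.domain) ∧
      ∀ (φ : M.domain) (ε : ℝ), 0 < ε → ∃ x : M.domain,
        (x : H) ∈ Submodule.span ℂ (Set.range e) ∧
        ‖(φ : H) - (x : H)‖ ≤ ε ∧ ‖M φ - M x‖ ≤ ε := by
  classical
  haveI : SecondCountableTopology H := UniformSpace.secondCountable_of_separable H
  obtain ⟨D, Dcount, Ddense⟩ :=
    TopologicalSpace.exists_countable_dense (M.graph : Set (H × H))
  set T : Set H := insert 0 ((fun q : (M.graph : Set (H × H)) => (q : H × H).1) '' D)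
    with hTdef
  have hTcount : T.Countable := (Dcount.image _).insert 0
  have hTne : T.Nonempty := ⟨0, mem_insert _ _⟩
  have hTsub : T ⊆ (M.domain : Set H) := by
    rintro x (rfl | ⟨q, _, rfl⟩)
    · exact M.domain.zero_mem
    · obtain ⟨y, hy1, _⟩ := M.mem_graph_iff.mp q.2
      simpa [← hy1] using y.2
  -- key graph-norm approximation by elements of `T`
  have key : ∀ (φ : M.domain) (ε : ℝ), 0 < ε → ∃ x : M.domain,
      (x : H) ∈ T ∧ ‖(φ : H) - (x : H)‖ ≤ ε ∧ ‖M φ - M x‖ ≤ ε := by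
    intro φ ε hε
    have hmem : ((φ : H), M φ) ∈ (M.graph : Set (H × H)) := M.mem_graph φ
    obtain ⟨q, hq_ball, hqD⟩ :=
      (Metric.dense_iff.mp Ddense ⟨_, hmem⟩ ε hε)
    have hdist : dist ((φ : H), M φ) (q : H × H) < ε := by
      simpa [Subtype.dist_eq, dist_comm] using Metric.mem_ball.mp hq_ball
    rw [Prod.dist_eq, max_lt_iff] at hdist
    obtain ⟨y, hy1, hy2⟩ := M.mem_graph_iff.mp q.2
    refine ⟨y, ?_, ?_, ?_⟩
    · exact hy1 ▸ Or.inr ⟨q, hqD, rfl⟩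
    · rw [hy1, ← dist_eq_norm]; exact hdist.1.le
    · rw [hy2, ← dist_eq_norm]; exact hdist.2.le
  -- enumerate T and Gram–Schmidt it
  obtain ⟨f, hf⟩ := hTcount.exists_eq_range hTne
  refine ⟨{n : ℕ // gramSchmidtNormed ℂ f n ≠ 0}, inferInstance,
    fun n => gramSchmidtNormed ℂ f n, gramSchmidtNormed_orthonormal' f, ?_, ?_, ?_⟩
  all_goals
    have hspan : span ℂ (range fun n : {n : ℕ // gramSchmidtNormed ℂ f n ≠ 0} =>
        gramSchmidtNormed ℂ f n) = span ℂ T := by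
      rw [hf]
      apply le_antisymm
      · refine span_le.mpr ?_
        rintro x ⟨i, rfl⟩
        have h1 : gramSchmidtNormed ℂ f (i : ℕ) ∈
            span ℂ (range (gramSchmidtNormed ℂ f)) := subset_span (mem_range_self _)
        rwa [span_gramSchmidtNormed_range, span_gramSchmidt] at h1
      · rw [← span_gramSchmidt ℂ f, ← span_gramSchmidtNormed_range]
        refine span_le.mpr ?_
        rintro x ⟨n, rfl⟩
        by_cases h : gramSchmidtNormed ℂ f n = 0
        · simp [h]
        · exact subset_span ⟨⟨n, h⟩, rfl⟩
  · -- density of the span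
    have hdsub : (M.domain : Set H) ⊆
        closure ((span ℂ T : Submodule ℂ H) : Set H) := by
      intro φ hφ
      rw [Metric.mem_closure_iff]
      intro ε hε
      obtain ⟨x, hxT, hx1, _⟩ := key ⟨φ, hφ⟩ (ε / 2) (by linarith)
      exact ⟨x, subset_span hxT, by rw [dist_eq_norm]; linarith⟩
    rw [hspan, dense_iff_closure_eq, ← univ_subset_iff]
    calc (univ : Set H) = closure (M.domain : Set H) := hdense.closure_eq.symm
      _ ⊆ closure (closure ((span ℂ T : Submodule ℂ H) : Set H)) := closure_mono hdsub
      _ = closure ((span ℂ T : Submodule ℂ H) : Set H) := closure_closure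
  · -- membership in the domain
    intro i
    have : gramSchmidtNormed ℂ f (i : ℕ) ∈ span ℂ T := hspan ▸ subset_span (mem_range_self _)
    exact (span_le.mpr hTsub) this
  · -- the core property
    intro φ ε hε
    obtain ⟨x, hxT, hx1, hx2⟩ := key φ ε hε
    exact ⟨x, hspan ▸ subset_span hxT, hx1, hx2⟩
end

section
/- Let H be a separable complex Hilbert space with orthonormal bases {e_n} and {f_n}, and let D_e, D_f be their finite linear spans. Let Q assign to each element of D_e² (the span of the matrix units |e_k⟩⟨e_ℓ|) a quadratic form with form domain D_f, linearly in the matrix units, and assume Q is completely positive: for every finitely supported family of complex coefficients c_{i,k}, Σ_{i,k,j,ℓ} c_{i,k}* c_{j,ℓ} ⟨f_i|Q(|e_k⟩⟨e_ℓ|)|f_j⟩ ≥ 0. Then there exists a countable family of generalized Kraus operators K_α (linear maps from D_e to the algebraic conjugate dual of D_f) such that ⟨f_i|Q(|e_k⟩⟨e_ℓ|)|f_j⟩ = Σ_α ⟨f_i|K_α|e_k⟩ · ⟨f_j|K_α|e_ℓ⟩* for all i, j, k, ℓ, that is, Q(ρ) = Σ_α K_α ρ K_α† on D_e². -/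
open scoped ComplexConjugate ComplexOrder

noncomputable section
namespace KrausAux

def QF (M : ℕ → ℕ → ℂ) (s : Finset ℕ) (c : ℕ → ℂ) : ℂ :=
  ∑ m ∈ s, ∑ n ∈ s, conj (c m) * c n * M m n

def PSD (M : ℕ → ℕ → ℂ) : Prop := ∀ s c, 0 ≤ QF M s c

lemma diag_nonneg {M} (h : PSD M) (n : ℕ) : 0 ≤ M n n := by
  have := h {n} (fun _ => 1)
  simpa [QF] using this

lemma pair_expand (M : ℕ → ℕ → ℂ) {m n : ℕ} (hmn : m ≠ n) (a b : ℂ) :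
    QF M {m, n} (fun x => if x = m then a else b) =
      conj a * a * M m m + conj a * b * M m n + conj b * a * M n m + conj b * b * M n n := by
  simp [QF, Finset.sum_pair hmn, hmn, Ne.symm hmn]
  ring

lemma herm {M} (h : PSD M) (m n : ℕ) : M n m = conj (M m n) := by
  rcases eq_or_ne m n with rfl | hmn
  · have h0 := diag_nonneg h m
    rw [Complex.le_def] at h0
    apply Complex.ext <;> simp [← h0.2]
  · have h1 := h {m, n} (fun x => if x = m then 1 else 1)
    have h2 := h {m, n} (fun x => if x = m then 1 else Complex.I)
    rw [pair_expand M hmn] at h1 h2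
    have hm := diag_nonneg h m
    have hn := diag_nonneg h n
    rw [Complex.le_def] at h1 h2 hm hn
    have e1 := h1.2
    have e2 := h2.2
    have em := hm.2
    have en := hn.2
    simp [Complex.ext_iff] at e1 e2 em en
    apply Complex.ext <;> simp [Complex.ext_iff] <;> linarith


lemma row_zero {M} (h : PSD M) {t : ℕ} (ht : M t t = 0) (n : ℕ) : M t n = 0 := by
  rcases eq_or_ne t n with rfl | htn
  · exact ht
  · by_contra hne
    set u := M t n with hu
    have hns : 0 < Complex.normSq u := Complex.normSq_pos.mpr hne
    set r : ℝ := -((M n n).re + 1) / (2 * Complex.normSq u) with hr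
    have h2 := h {t, n} (fun x => if x = t then (r : ℂ) * u else 1)
    rw [pair_expand M htn] at h2
    rw [ht, herm h t n, ← hu] at h2
    rw [Complex.le_def] at h2
    have hre := h2.1
    have hnn := diag_nonneg h n
    rw [Complex.le_def] at hnn
    have hcalc : ((starRingEnd ℂ) ((r:ℂ)*u) * ((r:ℂ)*u) * 0 + (starRingEnd ℂ) ((r:ℂ)*u) * 1 * u +
        (starRingEnd ℂ) 1 * ((r:ℂ)*u) * (starRingEnd ℂ) u + (starRingEnd ℂ) 1 * 1 * M n n).re
        = 2 * r * Complex.normSq u + (M n n).re := by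
      simp [Complex.normSq_apply, Complex.add_re, Complex.mul_re]
      ring
    rw [hcalc] at hre
    have : 2 * r * Complex.normSq u = -((M n n).re + 1) := by
      rw [hr, mul_div_assoc', div_mul_eq_mul_div, div_eq_iff (mul_ne_zero two_ne_zero hns.ne')]
      ring
    rw [this] at hre
    simp at hre
    linarith


lemma QF_superset {M : ℕ → ℕ → ℂ} {s s' : Finset ℕ} (hss : s ⊆ s') {c : ℕ → ℂ}
    (hc : ∀ x ∉ s, c x = 0) : QF M s' c = QF M s c := by
  unfold QF
  have inner : ∀ m, ∑ n ∈ s', conj (c m) * c n * M m n = ∑ n ∈ s, conj (c m) * c n * M m n :=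
    fun m => (Finset.sum_subset hss (fun n _ hn => by simp [hc n hn])).symm
  rw [Finset.sum_congr rfl (fun m _ => inner m)]
  exact (Finset.sum_subset hss (fun m _ hm => by
    apply Finset.sum_eq_zero; intro n _; simp [hc m hm])).symm

lemma QF_add (M : ℕ → ℕ → ℂ) (s : Finset ℕ) (a b : ℕ → ℂ) :
    QF M s (fun x => a x + b x) = QF M s a
      + (∑ m ∈ s, ∑ n ∈ s, conj (a m) * b n * M m n)
      + (∑ m ∈ s, ∑ n ∈ s, conj (b m) * a n * M m n) + QF M s b := by
  simp [QF, map_add, add_mul, mul_add, Finset.sum_add_distrib]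
  ring_nf

lemma delta_right (M : ℕ → ℕ → ℂ) {s' : Finset ℕ} {t : ℕ} (hts : t ∈ s') (c : ℕ → ℂ) (z : ℂ) :
    ∑ m ∈ s', ∑ n ∈ s', conj (c m) * (if n = t then z else 0) * M m n
      = z * ∑ m ∈ s', conj (c m) * M m t := by
  rw [Finset.mul_sum]
  apply Finset.sum_congr rfl
  intro m _
  rw [show ∑ n ∈ s', conj (c m) * (if n = t then z else 0) * M m n
      = ∑ n ∈ s', (if n = t then conj (c m) * z * M m n else 0) from
    Finset.sum_congr rfl fun n _ => by split_ifs <;> simp]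
  rw [Finset.sum_ite_eq' s' t]
  simp [hts]
  ring

lemma delta_left (M : ℕ → ℕ → ℂ) {s' : Finset ℕ} {t : ℕ} (hts : t ∈ s') (c : ℕ → ℂ) (z : ℂ) :
    ∑ m ∈ s', ∑ n ∈ s', conj (if m = t then z else 0) * c n * M m n
      = conj z * ∑ n ∈ s', c n * M t n := by
  have step1 : ∀ m ∈ s', (∑ n ∈ s', conj (if m = t then z else 0) * c n * M m n)
      = (if m = t then conj z * ∑ n ∈ s', c n * M t n else 0) := by
    intro m _
    split_ifs with hm
    · subst hm; rw [Finset.mul_sum]; apply Finset.sum_congr rfl; intro n _; ring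
    · simp
  rw [Finset.sum_congr rfl step1, Finset.sum_ite_eq' s' t]
  simp [hts]


lemma QF_congr {M : ℕ → ℕ → ℂ} {s : Finset ℕ} {c c' : ℕ → ℂ} (h : ∀ x ∈ s, c x = c' x) :
    QF M s c = QF M s c' := by
  unfold QF
  apply Finset.sum_congr rfl
  intro m hm
  apply Finset.sum_congr rfl
  intro n hn
  rw [h m hm, h n hn]

lemma QF_insert (M : ℕ → ℕ → ℂ) (s : Finset ℕ) (t : ℕ) (c : ℕ → ℂ)
    (hc : ∀ x ∉ s, c x = 0) (z : ℂ) :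
    QF M (insert t s) (fun x => c x + if x = t then z else 0)
      = QF M s c + z * (∑ m ∈ s, conj (c m) * M m t)
        + conj z * (∑ n ∈ s, c n * M t n) + conj z * z * M t t := by
  have hts : t ∈ insert t s := Finset.mem_insert_self t s
  have hss : s ⊆ insert t s := Finset.subset_insert t s
  rw [QF_add M (insert t s) c (fun x => if x = t then z else 0)]
  rw [QF_superset hss hc]
  rw [delta_right M hts c z, delta_left M hts c z]
  have e1 : ∑ m ∈ insert t s, conj (c m) * M m t = ∑ m ∈ s, conj (c m) * M m t :=
    (Finset.sum_subset hss (fun m _ hm => by simp [hc m hm])).symm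
  have e2 : ∑ n ∈ insert t s, c n * M t n = ∑ n ∈ s, c n * M t n :=
    (Finset.sum_subset hss (fun n _ hn => by simp [hc n hn])).symm
  have e3 : QF M (insert t s) (fun x => if x = t then z else 0) = conj z * z * M t t := by
    unfold QF
    rw [delta_left M hts (fun x => if x = t then z else 0) z]
    have : ∑ n ∈ insert t s, (if n = t then z else 0) * M t n
        = ∑ n ∈ insert t s, (if n = t then z * M t n else 0) :=
      Finset.sum_congr rfl fun n _ => by split_ifs <;> simp
    rw [this, Finset.sum_ite_eq' _ t]
    simp [hts]
    ring
  rw [e1, e2, e3]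

def Row (M : ℕ → ℕ → ℂ) (t n : ℕ) : ℂ :=
  if M t t = 0 then 0 else M n t / ((Real.sqrt (M t t).re : ℝ) : ℂ)

def Step (M : ℕ → ℕ → ℂ) (t : ℕ) : ℕ → ℕ → ℂ :=
  fun m n => M m n - Row M t m * conj (Row M t n)

lemma QF_step (M : ℕ → ℕ → ℂ) (t : ℕ) (s : Finset ℕ) (c : ℕ → ℂ) :
    QF (Step M t) s c = QF M s c
      - conj (∑ n ∈ s, c n * conj (Row M t n)) * (∑ n ∈ s, c n * conj (Row M t n)) := by
  unfold QF Step
  have expand : ∀ m ∈ s, ∑ n ∈ s, conj (c m) * c n * (M m n - Row M t m * conj (Row M t n))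
      = (∑ n ∈ s, conj (c m) * c n * M m n)
        - (∑ n ∈ s, (conj (c m) * Row M t m) * (c n * conj (Row M t n))) := by
    intro m _
    rw [← Finset.sum_sub_distrib]
    apply Finset.sum_congr rfl
    intro n _
    ring
  rw [Finset.sum_congr rfl expand, Finset.sum_sub_distrib]
  congr 1
  rw [← Finset.sum_mul_sum, map_sum]
  congr 1
  apply Finset.sum_congr rfl
  intro n _
  simp

lemma step_psd {M : ℕ → ℕ → ℂ} (h : PSD M) (t : ℕ) : PSD (Step M t) := by
  intro s c
  set cb : ℕ → ℂ := fun x => if x ∈ s then c x else 0 with hcb_def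
  have hcb : ∀ x ∉ s, cb x = 0 := fun x hx => by simp [hcb_def, hx]
  have hon : ∀ x ∈ s, c x = cb x := fun x hx => by simp [hcb_def, hx]
  rw [QF_congr (M := Step M t) hon, QF_step]
  rw [Finset.sum_congr rfl (fun n hn => rfl)] -- no-op
  by_cases h0 : M t t = 0
  · simp only [Row, h0, if_pos, map_zero, mul_zero, Finset.sum_const_zero]
    simpa using h s cb
  · have hd := diag_nonneg h t
    rw [Complex.le_def] at hd
    have him : (M t t).im = 0 := by simpa using hd.2.symm
    set ρ : ℝ := (M t t).re with hρdef
    have hdeq : M t t = (ρ : ℂ) := Complex.ext rfl (by simp [him])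
    have hρpos : 0 < ρ := by
      rcases lt_or_eq_of_le (by simpa using hd.1) with h' | h'
      · exact h'
      · exact absurd (by rw [hdeq, ← h']; simp) h0
    have hsq : ((Real.sqrt ρ : ℝ) : ℂ) * ((Real.sqrt ρ : ℝ) : ℂ) = (ρ : ℂ) := by
      rw [← Complex.ofReal_mul, Real.mul_self_sqrt hρpos.le]
    set w : ℂ := ∑ n ∈ s, cb n * M t n with hw
    have hrow : ∀ n, conj (Row M t n) = M t n / ((Real.sqrt ρ : ℝ) : ℂ) := by
      intro n
      rw [Row, if_neg h0, map_div₀, herm h n t]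
      simp [Complex.conj_ofReal, hρdef]
    have hu : (∑ n ∈ s, cb n * conj (Row M t n)) = w / ((Real.sqrt ρ : ℝ) : ℂ) := by
      rw [hw, Finset.sum_div]
      apply Finset.sum_congr rfl
      intro n _
      rw [hrow n, mul_div_assoc]
    rw [hu]
    have hornot : ((Real.sqrt ρ : ℝ) : ℂ) ≠ 0 := by
      simp [Real.sqrt_eq_zero', hρpos, hρpos.le, not_le, Complex.ofReal_eq_zero]
      positivity
    have key : QF M s cb - conj (w / ((Real.sqrt ρ:ℝ):ℂ)) * (w / ((Real.sqrt ρ:ℝ):ℂ))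
        = QF M s cb + (-w/(ρ:ℂ)) * (∑ m ∈ s, conj (cb m) * M m t)
          + conj (-w/(ρ:ℂ)) * (∑ n ∈ s, cb n * M t n)
          + conj (-w/(ρ:ℂ)) * (-w/(ρ:ℂ)) * M t t := by
      have hmt : ∑ m ∈ s, conj (cb m) * M m t = conj w := by
        rw [hw, map_sum]
        apply Finset.sum_congr rfl
        intro m _
        rw [herm h t m]
        simp
      rw [hmt, hdeq, ← hw]
      have hρne : (ρ : ℂ) ≠ 0 := by
        simp [Complex.ofReal_eq_zero]; exact hρpos.ne'
      rw [map_div₀, map_div₀]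
      simp only [map_neg, Complex.conj_ofReal]
      field_simp
      rw [sq, hsq]
      ring
    rw [key]
    have := h (insert t s) (fun x => cb x + if x = t then (-w/(ρ:ℂ)) else 0)
    rwa [QF_insert M s t cb hcb (-w/(ρ:ℂ))] at this


lemma step_row_self {M : ℕ → ℕ → ℂ} (h : PSD M) (t n : ℕ) : Step M t t n = 0 := by
  by_cases h0 : M t t = 0
  · simp [Step, Row, h0, row_zero h h0 n]
  · have hd := diag_nonneg h t
    rw [Complex.le_def] at hd
    have him : (M t t).im = 0 := by simpa using hd.2.symm
    set ρ : ℝ := (M t t).re with hρdef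
    have hdeq : M t t = (ρ : ℂ) := Complex.ext rfl (by simp [him])
    have hρpos : 0 < ρ := by
      rcases lt_or_eq_of_le (by simpa using hd.1) with h' | h'
      · exact h'
      · exact absurd (by rw [hdeq, ← h']; simp) h0
    have hsq : ((Real.sqrt ρ : ℝ) : ℂ) * ((Real.sqrt ρ : ℝ) : ℂ) = (ρ : ℂ) := by
      rw [← Complex.ofReal_mul, Real.mul_self_sqrt hρpos.le]
    have hornot : ((Real.sqrt ρ : ℝ) : ℂ) ≠ 0 := by
      simp only [Complex.ofReal_ne_zero]
      positivity
    have hρne : (ρ : ℂ) ≠ 0 := by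
      simp only [Complex.ofReal_ne_zero]
      exact hρpos.ne'
    have hconj : conj (Row M t n) = M t n / ((Real.sqrt ρ : ℝ) : ℂ) := by
      rw [Row, if_neg h0, map_div₀, herm h n t]
      simp [Complex.conj_ofReal, hρdef]
    rw [Step, Row, if_neg h0, hconj, hdeq]
    field_simp
    rw [Complex.ofReal_re, ← hsq, mul_div_assoc, div_self hornot]
    ring

lemma step_row_prev {M : ℕ → ℕ → ℂ} {s : ℕ} (hs : ∀ k, M s k = 0) (t n : ℕ) :
    Step M t s n = 0 := by
  have hrow : Row M t s = 0 := by
    rw [Row]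
    split_ifs with h0
    · rfl
    · rw [hs t, zero_div]
  simp [Step, hrow, hs n]

def Seq (M : ℕ → ℕ → ℂ) : ℕ → ℕ → ℕ → ℂ
  | 0 => M
  | t + 1 => Step (Seq M t) t

lemma seq_spec {M : ℕ → ℕ → ℂ} (h : PSD M) :
    ∀ t, PSD (Seq M t) ∧ ∀ s < t, ∀ n, Seq M t s n = 0 := by
  intro t
  induction t with
  | zero => exact ⟨h, by omega⟩
  | succ t ih =>
    refine ⟨step_psd ih.1 t, ?_⟩
    intro s hs n
    rcases eq_or_lt_of_le (Nat.lt_succ_iff.mp hs) with rfl | hlt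
    · exact step_row_self ih.1 s n
    · exact step_row_prev (fun k => ih.2 s hlt k) t n

def KK (M : ℕ → ℕ → ℂ) (α : ℕ) : ℕ → ℂ := Row (Seq M α) α

lemma telescope (M : ℕ → ℕ → ℂ) (T m n : ℕ) :
    M m n = (∑ α ∈ Finset.range T, KK M α m * conj (KK M α n)) + Seq M T m n := by
  induction T with
  | zero => simp [Seq]
  | succ T ih =>
    rw [Finset.sum_range_succ]
    have : Seq M (T + 1) m n = Seq M T m n - KK M T m * conj (KK M T n) := rfl
    rw [this]
    rw [ih]
    ring

lemma KK_vanish {M : ℕ → ℕ → ℂ} (h : PSD M) {α m : ℕ} (hm : m < α) : KK M α m = 0 := by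
  rw [KK, Row]
  split_ifs with h0
  · rfl
  · rw [(seq_spec h α).2 m hm α, zero_div]

lemma factorization {M : ℕ → ℕ → ℂ} (h : PSD M) (m n : ℕ) :
    M m n = ∑ α ∈ Finset.range (m + 1), KK M α m * conj (KK M α n) := by
  have := telescope M (m + 1) m n
  rwa [(seq_spec h (m + 1)).2 m (Nat.lt_succ_self m) n, add_zero] at this

end KrausAux

/-- Theorem 2, generalized Kraus operators: let `Q` be a completely
positive map from `D_e²` into the quadratic forms with form domain `D_f`, on a separable
Hilbert space with orthonormal bases `{e_n}`, `{f_n}`. `Q` is determined by its matrix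
elements `q i j k l = ⟨f_i|Q(|e_k⟩⟨e_ℓ|)|f_j⟩`, and a generalized operator `K` (a linear
map from `D_e` to the algebraic conjugate dual of `D_f`) by its matrix elements
`⟨f_i|K|e_k⟩`. Complete positivity says `∑ c_{i,k}* c_{j,ℓ} q i j k l ≥ 0` for all
finitely supported coefficients; the conclusion is a countable family of generalized Kraus
operators `K_α` with `⟨f_i|Q(|e_k⟩⟨e_ℓ|)|f_j⟩ = ∑_α ⟨f_i|K_α|e_k⟩ ⟨f_j|K_α|e_ℓ⟩*`,
i.e. `Q(ρ) = ∑_α K_α ρ K_α†` on `D_e²`. -/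
theorem exists_generalized_kraus_operators (q : ℕ → ℕ → ℕ → ℕ → ℂ)
    (hcp : ∀ (s : Finset (ℕ × ℕ)) (c : ℕ × ℕ → ℂ),
      0 ≤ ∑ p ∈ s, ∑ r ∈ s, conj (c p) * c r * q p.1 r.1 p.2 r.2) :
    ∃ K : ℕ → ℕ → ℕ → ℂ,
      ∀ i j k l : ℕ,
        (Summable fun α => K α i k * conj (K α j l)) ∧
        q i j k l = ∑' α, K α i k * conj (K α j l) := by
  classical
  set e : ℕ ≃ ℕ × ℕ := (Denumerable.eqv (ℕ × ℕ)).symm with he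
  set M : ℕ → ℕ → ℂ := fun m n => q (e m).1 (e n).1 (e m).2 (e n).2 with hM
  have hpsd : KrausAux.PSD M := by
    intro s c
    have := hcp (s.image e) (fun p => c (e.symm p))
    rw [Finset.sum_image (fun a _ b _ hab => e.injective hab)] at this
    unfold KrausAux.QF
    convert this using 2 with m hm
    rw [Finset.sum_image (fun a _ b _ hab => e.injective hab)]
    simp [hM]
  refine ⟨fun α i k => KrausAux.KK M α (e.symm (i, k)), ?_⟩
  intro i j k l
  set m : ℕ := e.symm (i, k) with hm
  set n : ℕ := e.symm (j, l) with hn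
  have hvan : ∀ α ∉ Finset.range (m + 1),
      KrausAux.KK M α m * conj (KrausAux.KK M α n) = 0 := by
    intro α hα
    rw [Finset.mem_range, not_lt] at hα
    rw [KrausAux.KK_vanish hpsd (by omega), zero_mul]
  have hq : q i j k l = M m n := by
    simp [hM, hm, hn]
  constructor
  · exact summable_of_ne_finset_zero hvan
  · rw [tsum_eq_sum hvan, hq, KrausAux.factorization hpsd m n]
end
end

section
/- Let H be a separable complex Hilbert space with orthonormal bases {e_n}, {f_n} and let Q be a completely positive map on D_e² with generalized Kraus representation ⟨f_i|Q(|e_k⟩⟨e_ℓ|)|f_j⟩ = Σ_α ⟨f_i|K_α|e_k⟩⟨f_j|K_α|e_ℓ⟩*. Assume moreover that for each φ ∈ D_e the quadratic form Q(|φ⟩⟨φ|) is given by a bounded operator on H, i.e., there is a bounded operator Q̆(|φ⟩⟨φ|) with ⟨ψ|Q(|φ⟩⟨φ|)|ψ⟩ = ⟨ψ, Q̆(|φ⟩⟨φ|)ψ⟩ for all ψ ∈ D_f. Then each K_α maps D_e into H: for every φ ∈ D_e the functional ψ ↦ ⟨ψ|K_α|φ⟩ is bounded on D_f, and Σ_α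 |⟨ψ|K_α|φ⟩|² ≤ ‖Q̆(|φ⟩⟨φ|)‖·‖ψ‖² for every ψ ∈ D_f; in particular ‖K_α φ‖² ≤ ‖Q̆(|φ⟩⟨φ|)‖ for ‖φ‖-normalized φ up to the factor ‖φ‖² in the obvious scaling. -/
open scoped ComplexConjugate ComplexOrder InnerProductSpace ComplexInnerProductSpace

/-- Corollary 1: let `Q` be a completely positive map on `D_e²` with a
generalized Kraus representation `⟨f_i|Q(|e_k⟩⟨e_ℓ|)|f_j⟩ = ∑_α ⟨f_i|K_α|e_k⟩⟨f_j|K_α|e_ℓ⟩*`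
(matrix elements `q i j k l` resp. `K α i k` w.r.t. orthonormal bases `{e_n}`, `{f_n}`).
If for `φ = ∑_k a_k e_k ∈ D_e` the quadratic form `Q(|φ⟩⟨φ|)` is given by a bounded
operator `B = Q̆(|φ⟩⟨φ|)` on `H` (tested against vectors `ψ = ∑_i b_i f_i ∈ D_f`), then
each `K_α` maps `φ` into `H`: the functional `ψ ↦ ⟨ψ|K_α|φ⟩` is bounded on `D_f`, and
`∑_α |⟨ψ|K_α|φ⟩|² ≤ ‖Q̆(|φ⟩⟨φ|)‖·‖ψ‖²` for every `ψ ∈ D_f`. -/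
theorem kraus_operators_map_into_space {H : Type*} [NormedAddCommGroup H]
    [InnerProductSpace ℂ H] [CompleteSpace H] [TopologicalSpace.SeparableSpace H]
    (f : ℕ → H) (hf : Orthonormal ℂ f)
    (hftotal : Dense ((Submodule.span ℂ (Set.range f) : Submodule ℂ H) : Set H))
    (q : ℕ → ℕ → ℕ → ℕ → ℂ)
    (hcp : ∀ (s : Finset (ℕ × ℕ)) (c : ℕ × ℕ → ℂ),
      0 ≤ ∑ p ∈ s, ∑ r ∈ s, conj (c p) * c r * q p.1 r.1 p.2 r.2)
    (K : ℕ → ℕ → ℕ → ℂ)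
    (hKsum : ∀ i j k l : ℕ, Summable fun α => K α i k * conj (K α j l))
    (hK : ∀ i j k l : ℕ, q i j k l = ∑' α, K α i k * conj (K α j l))
    (a : ℕ →₀ ℂ)  -- the coefficients of `φ = ∑_k a_k e_k ∈ D_e`
    (B : H →L[ℂ] H)
    (hB : ∀ b : ℕ →₀ ℂ,  -- `⟨ψ|Q(|φ⟩⟨φ|)|ψ⟩ = ⟨ψ, Bψ⟩` for `ψ = ∑_i b_i f_i ∈ D_f`
      ∑ i ∈ b.support, ∑ j ∈ b.support, conj (b i) * b j *
          (∑ k ∈ a.support, ∑ l ∈ a.support, a k * conj (a l) * q i j k l)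
        = ⟪(∑ i ∈ b.support, b i • f i), B (∑ j ∈ b.support, b j • f j)⟫_ℂ) :
    (∀ α : ℕ, ∃ C : ℝ, ∀ b : ℕ →₀ ℂ,
      ‖∑ i ∈ b.support, conj (b i) * ∑ k ∈ a.support, a k * K α i k‖
        ≤ C * ‖∑ i ∈ b.support, b i • f i‖) ∧
    ∀ b : ℕ →₀ ℂ,
      (Summable fun α =>
        ‖∑ i ∈ b.support, conj (b i) * ∑ k ∈ a.support, a k * K α i k‖ ^ 2) ∧
      (∑' α, ‖∑ i ∈ b.support, conj (b i) * ∑ k ∈ a.support, a k * K α i k‖ ^ 2)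
        ≤ ‖B‖ * ‖∑ i ∈ b.support, b i • f i‖ ^ 2 := by
  set T : ℕ → (ℕ →₀ ℂ) → ℂ := fun α b =>
    ∑ i ∈ b.support, conj (b i) * ∑ k ∈ a.support, a k * K α i k with hT
  -- key algebraic expansion
  have key : ∀ (α : ℕ) (b : ℕ →₀ ℂ), T α b * conj (T α b) =
      ∑ i ∈ b.support, ∑ j ∈ b.support, ∑ k ∈ a.support, ∑ l ∈ a.support,
        (conj (b i) * b j * (a k * conj (a l))) * (K α i k * conj (K α j l)) := by
    intro α b
    rw [hT]
    simp only [map_sum, Finset.sum_mul_sum, map_mul, RingHomCompTriple.comp_apply,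
      RingHom.id_apply, Finset.mul_sum, Finset.sum_mul]
    calc (∑ j ∈ b.support, ∑ l ∈ a.support, ∑ i ∈ b.support, ∑ k ∈ a.support,
            conj (b i) * (a k * K α i k) * (b j * (conj (a l) * conj (K α j l))))
        = ∑ j ∈ b.support, ∑ i ∈ b.support, ∑ l ∈ a.support, ∑ k ∈ a.support,
            conj (b i) * (a k * K α i k) * (b j * (conj (a l) * conj (K α j l))) :=
          Finset.sum_congr rfl fun j _ => Finset.sum_comm
      _ = ∑ i ∈ b.support, ∑ j ∈ b.support, ∑ l ∈ a.support, ∑ k ∈ a.support,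
            conj (b i) * (a k * K α i k) * (b j * (conj (a l) * conj (K α j l))) :=
          Finset.sum_comm
      _ = ∑ i ∈ b.support, ∑ j ∈ b.support, ∑ k ∈ a.support, ∑ l ∈ a.support,
            conj (b i) * (a k * K α i k) * (b j * (conj (a l) * conj (K α j l))) :=
          Finset.sum_congr rfl fun i _ => Finset.sum_congr rfl fun j _ => Finset.sum_comm
      _ = _ := Finset.sum_congr rfl fun i _ => Finset.sum_congr rfl fun j _ =>
            Finset.sum_congr rfl fun k _ => Finset.sum_congr rfl fun l _ => by ring
  -- summability of the quadratic terms
  have hsum : ∀ b : ℕ →₀ ℂ, Summable fun α => T α b * conj (T α b) := by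
    intro b
    have : Summable fun α => ∑ i ∈ b.support, ∑ j ∈ b.support, ∑ k ∈ a.support,
        ∑ l ∈ a.support,
        (conj (b i) * b j * (a k * conj (a l))) * (K α i k * conj (K α j l)) :=
      summable_sum fun i _ => summable_sum fun j _ => summable_sum fun k _ =>
        summable_sum fun l _ => (hKsum i j k l).mul_left _
    exact this.congr fun α => (key α b).symm
  -- the main identity
  have main : ∀ b : ℕ →₀ ℂ,
      (∑' α, T α b * conj (T α b)) = ⟪(∑ i ∈ b.support, b i • f i),
        B (∑ j ∈ b.support, b j • f j)⟫_ℂ := by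
    intro b
    rw [← hB b]
    have h1 : (∑' α, T α b * conj (T α b)) =
        ∑' α, ∑ i ∈ b.support, ∑ j ∈ b.support, ∑ k ∈ a.support, ∑ l ∈ a.support,
          (conj (b i) * b j * (a k * conj (a l))) * (K α i k * conj (K α j l)) :=
      tsum_congr fun α => key α b
    rw [h1, Summable.tsum_finsetSum fun i _ => summable_sum fun j _ => summable_sum fun k _ =>
      summable_sum fun l _ => (hKsum i j k l).mul_left _]
    simp only [Finset.mul_sum]
    refine Finset.sum_congr rfl fun i _ => ?_
    rw [Summable.tsum_finsetSum fun j _ => summable_sum fun k _ =>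
      summable_sum fun l _ => (hKsum i j k l).mul_left _]
    refine Finset.sum_congr rfl fun j _ => ?_
    rw [Summable.tsum_finsetSum fun k _ => summable_sum fun l _ => (hKsum i j k l).mul_left _]
    refine Finset.sum_congr rfl fun k _ => ?_
    rw [Summable.tsum_finsetSum fun l _ => (hKsum i j k l).mul_left _]
    refine Finset.sum_congr rfl fun l _ => ?_
    rw [hK i j k l, ← tsum_mul_left, ← tsum_mul_left]
    exact tsum_congr fun α => by ring
  -- rewrite quadratic terms as norms
  have hnorm : ∀ (α : ℕ) (b : ℕ →₀ ℂ),
      T α b * conj (T α b) = ((‖T α b‖ ^ 2 : ℝ) : ℂ) := by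
    intro α b
    rw [Complex.mul_conj]
    norm_cast
    rw [Complex.normSq_eq_norm_sq]
  -- real summability
  have hsumR : ∀ b : ℕ →₀ ℂ, Summable fun α => ‖T α b‖ ^ 2 := by
    intro b
    rw [← Complex.summable_ofReal]
    exact (hsum b).congr fun α => (hnorm α b)
  -- real bound
  have hbound : ∀ b : ℕ →₀ ℂ,
      (∑' α, ‖T α b‖ ^ 2) ≤ ‖B‖ * ‖∑ i ∈ b.support, b i • f i‖ ^ 2 := by
    intro b
    set ψ := ∑ i ∈ b.support, b i • f i
    have hcoe : ((∑' α, ‖T α b‖ ^ 2 : ℝ) : ℂ) = ⟪ψ, B ψ⟫_ℂ := by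
      rw [← main b, Complex.ofReal_tsum]
      exact tsum_congr fun α => (hnorm α b).symm
    have hre : (∑' α, ‖T α b‖ ^ 2) = (⟪ψ, B ψ⟫_ℂ).re := by
      rw [← hcoe, Complex.ofReal_re]
    rw [hre]
    calc (⟪ψ, B ψ⟫_ℂ).re ≤ ‖⟪ψ, B ψ⟫_ℂ‖ := Complex.re_le_norm _
      _ ≤ ‖ψ‖ * ‖B ψ‖ := norm_inner_le_norm _ _
      _ ≤ ‖ψ‖ * (‖B‖ * ‖ψ‖) := by gcongr; exact B.le_opNorm ψ
      _ = ‖B‖ * ‖ψ‖ ^ 2 := by ring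
  refine ⟨fun α => ⟨Real.sqrt ‖B‖, fun b => ?_⟩, fun b => ⟨hsumR b, hbound b⟩⟩
  have h1 : ‖T α b‖ ^ 2 ≤ ∑' β, ‖T β b‖ ^ 2 :=
    Summable.le_tsum (hsumR b) α fun β _ => by positivity
  have h2 : ‖T α b‖ ^ 2 ≤ ‖B‖ * ‖∑ i ∈ b.support, b i • f i‖ ^ 2 :=
    h1.trans (hbound b)
  show ‖T α b‖ ≤ Real.sqrt ‖B‖ * ‖∑ i ∈ b.support, b i • f i‖
  calc ‖T α b‖ = Real.sqrt (‖T α b‖ ^ 2) := (Real.sqrt_sq (norm_nonneg _)).symm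
    _ ≤ Real.sqrt (‖B‖ * ‖∑ i ∈ b.support, b i • f i‖ ^ 2) := Real.sqrt_le_sqrt h2
    _ = Real.sqrt ‖B‖ * ‖∑ i ∈ b.support, b i • f i‖ := by
        rw [Real.sqrt_mul (norm_nonneg _), Real.sqrt_sq (norm_nonneg _)]
end
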